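/- The function $f(t) = t\,q(t)$, where $q(t) = (t-\sqrt{t^2-4})/2$, is strictly decreasing on $(2, \infty)$, and $f(t) > 1$ for all $t > 2$. -/

import Mathlib

noncomputable def q (t : ℝ) : ℝ := (t - Real.sqrt (t ^ 2 - 4)) / 2

noncomputable def u : ℕ → ℝ → ℝ
  | 0, _ => 1
  | 1, x => x
  | (n + 2), x => x * u (n + 1) x - u n x

lemma sq_sqrt' {t : ℝ} (ht : 2 < t) : Real.sqrt (t ^ 2 - 4) ^ 2 = t ^ 2 - 4 := by
  rw [Real.sq_sqrt]; nlinarith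

lemma key {t : ℝ} (ht : 2 < t) : t * q t = 2 * t / (t + Real.sqrt (t ^ 2 - 4)) := by
  have hs := Real.sqrt_nonneg (t ^ 2 - 4)
  have hsq := sq_sqrt' ht
  have hpos : 0 < t + Real.sqrt (t ^ 2 - 4) := by linarith
  unfold q
  field_simp [q]
  nlinarith

theorem stmt4 :
    StrictAntiOn (fun t : ℝ => t * q t) (Set.Ioi 2) ∧
    ∀ t : ℝ, 2 < t → 1 < t * q t := by
  constructor
  · intro a ha b hb hab
    simp only [Set.mem_Ioi] at ha hb
    show b * q b < a * q a
    rw [key ha, key hb]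
    have hsa := Real.sqrt_nonneg (a ^ 2 - 4)
    have hsb := Real.sqrt_nonneg (b ^ 2 - 4)
    have hsqa := sq_sqrt' ha
    have hsqb := sq_sqrt' hb
    have hpa : 0 < a + Real.sqrt (a ^ 2 - 4) := by linarith
    have hpb : 0 < b + Real.sqrt (b ^ 2 - 4) := by linarith
    rw [div_lt_div_iff₀ hpb hpa]
    have h1 : b * Real.sqrt (a ^ 2 - 4) < a * Real.sqrt (b ^ 2 - 4) := by
      nlinarith [sq_nonneg (b * Real.sqrt (a ^ 2 - 4) - a * Real.sqrt (b ^ 2 - 4)),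
        mul_nonneg (le_of_lt (by linarith : (0:ℝ) < b)) hsa,
        mul_nonneg (le_of_lt (by linarith : (0:ℝ) < a)) hsb]
    nlinarith
  · intro t ht
    rw [key ht]
    have hs := Real.sqrt_nonneg (t ^ 2 - 4)
    have hsq := sq_sqrt' ht
    have hpos : 0 < t + Real.sqrt (t ^ 2 - 4) := by linarith
    rw [lt_div_iff₀ hpos]
    have : Real.sqrt (t ^ 2 - 4) < t := by nlinarith
    linarith
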